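/- If g is a formal power series with g(0) = 0 satisfying Lagrange's equation g(z) = zψ(g(z)) for a formal power series ψ with ψ(0) ≠ 0, then for all n ≥ 1 the n-th coefficient of g equals (1/n) times the (n−1)-th coefficient of ψ(z)^n. -/

import Mathlib

open PowerSeries

/-- Composition ψ(g) of formal power series, valid when g has zero constant term:
the n-th coefficient is Σ_{k ≤ n} ψ_k · coeff_n(g^k). -/
noncomputable def psComp {K : Type*} [CommRing K] (ψ g : PowerSeries K) : PowerSeries K :=
  PowerSeries.mk fun n => ∑ k ∈ Finset.range (n + 1),
    (PowerSeries.coeff (R := K) k ψ) * (PowerSeries.coeff (R := K) n (g ^ k))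

namespace LagAux

variable {K : Type*} [CommRing K]

lemma coeff_pow_eq_zero {g : PowerSeries K} (hg0 : PowerSeries.constantCoeff (R := K) g = 0)
    {k n : ℕ} (h : n < k) : PowerSeries.coeff (R := K) n (g ^ k) = 0 :=
  (PowerSeries.X_pow_dvd_iff.mp (pow_dvd_pow_of_dvd (PowerSeries.X_dvd_iff.mpr hg0) k)) n h

lemma coeff_aeval {g : PowerSeries K} (hg0 : PowerSeries.constantCoeff (R := K) g = 0)
    (p : Polynomial K) (n : ℕ) :
    PowerSeries.coeff (R := K) n (Polynomial.aeval g p)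
      = ∑ k ∈ Finset.range (n + 1), p.coeff k * PowerSeries.coeff (R := K) n (g ^ k) := by
  have hN : p.natDegree < max (p.natDegree + 1) (n + 1) :=
    lt_of_lt_of_le (Nat.lt_succ_self _) (le_max_left _ _)
  rw [Polynomial.aeval_eq_sum_range' hN, map_sum]
  simp_rw [LinearMap.map_smul, smul_eq_mul]
  symm
  apply Finset.sum_subset (Finset.range_subset_range.mpr (le_max_right _ _))
  intro i _ hi
  rw [coeff_pow_eq_zero hg0 (by simpa using hi), mul_zero]

lemma coeff_psComp (ψ g : PowerSeries K) (n : ℕ) :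
    PowerSeries.coeff (R := K) n (psComp ψ g) = ∑ k ∈ Finset.range (n + 1),
      (PowerSeries.coeff (R := K) k ψ) * (PowerSeries.coeff (R := K) n (g ^ k)) := by
  simp [psComp]

lemma coeff_psComp_eq_trunc {g : PowerSeries K} (hg0 : PowerSeries.constantCoeff (R := K) g = 0)
    (ψ : PowerSeries K) {n m : ℕ} (h : n < m) :
    PowerSeries.coeff (R := K) n (psComp ψ g)
      = PowerSeries.coeff (R := K) n (Polynomial.aeval g (PowerSeries.trunc m ψ)) := by
  rw [coeff_psComp, coeff_aeval hg0]
  refine Finset.sum_congr rfl fun k hk => ?_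
  rw [PowerSeries.coeff_trunc, if_pos (lt_of_lt_of_le (Finset.mem_range.mp hk) h)]

lemma psComp_coe {g : PowerSeries K} (hg0 : PowerSeries.constantCoeff (R := K) g = 0)
    (p : Polynomial K) : psComp (p : PowerSeries K) g = Polynomial.aeval g p := by
  ext n
  rw [coeff_psComp, coeff_aeval hg0]
  refine Finset.sum_congr rfl fun k _ => ?_
  rw [Polynomial.coeff_coe]

lemma psComp_add (φ ψ g : PowerSeries K) :
    psComp (φ + ψ) g = psComp φ g + psComp ψ g := by
  ext n
  simp [coeff_psComp, Finset.sum_add_distrib, add_mul]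

lemma psComp_mul {g : PowerSeries K} (hg0 : PowerSeries.constantCoeff (R := K) g = 0)
    (φ ψ : PowerSeries K) : psComp (φ * ψ) g = psComp φ g * psComp ψ g := by
  ext n
  rw [PowerSeries.coeff_mul]
  have hsum : ∑ p ∈ Finset.HasAntidiagonal.antidiagonal n,
      PowerSeries.coeff (R := K) p.1 (psComp φ g) * PowerSeries.coeff (R := K) p.2 (psComp ψ g)
      = ∑ p ∈ Finset.HasAntidiagonal.antidiagonal n,
      PowerSeries.coeff (R := K) p.1 (Polynomial.aeval g (PowerSeries.trunc (n+1) φ)) *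
      PowerSeries.coeff (R := K) p.2 (Polynomial.aeval g (PowerSeries.trunc (n+1) ψ)) := by
    refine Finset.sum_congr rfl fun p hp => ?_
    have h1 : p.1 ≤ n := Finset.HasAntidiagonal.antidiagonal.fst_le hp
    have h2 : p.2 ≤ n := Finset.HasAntidiagonal.antidiagonal.snd_le hp
    rw [coeff_psComp_eq_trunc hg0 φ (Nat.lt_succ_of_le h1),
        coeff_psComp_eq_trunc hg0 ψ (Nat.lt_succ_of_le h2)]
  rw [hsum, ← PowerSeries.coeff_mul, ← map_mul,
    coeff_psComp_eq_trunc hg0 (φ * ψ) (Nat.lt_succ_self n)]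
  rw [coeff_aeval hg0, coeff_aeval hg0]
  refine Finset.sum_congr rfl fun k hk => ?_
  have hkn : k < n + 1 := Finset.mem_range.mp hk
  congr 1
  rw [PowerSeries.coeff_trunc, if_pos hkn,
    PowerSeries.coeff_mul_eq_coeff_trunc_mul_trunc φ ψ hkn,
    ← Polynomial.coe_mul, Polynomial.coeff_coe]

lemma psComp_one (g : PowerSeries K) : psComp 1 g = 1 := by
  ext n
  rw [coeff_psComp]
  rw [Finset.sum_eq_single 0]
  · simp
  · intro k _ hk
    simp [PowerSeries.coeff_one, hk]
  · simp

lemma psComp_pow {g : PowerSeries K} (hg0 : PowerSeries.constantCoeff (R := K) g = 0)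
    (ψ : PowerSeries K) (n : ℕ) : psComp (ψ ^ n) g = (psComp ψ g) ^ n := by
  induction n with
  | zero => simpa using psComp_one g
  | succ n ih => rw [pow_succ, psComp_mul hg0, ih, pow_succ]

lemma psComp_X {g : PowerSeries K} (hg0 : PowerSeries.constantCoeff (R := K) g = 0) :
    psComp PowerSeries.X g = g := by
  ext n
  rw [coeff_psComp]
  cases n with
  | zero =>
    simp [PowerSeries.coeff_X, hg0]
  | succ n =>
    rw [Finset.sum_eq_single 1]
    · simp
    · intro k _ hk
      simp [PowerSeries.coeff_X, hk]
    · intro h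
      exact absurd (Finset.mem_range.mpr (by omega)) h

end LagAux

open LagAux Polynomial in
/-- Lagrange inversion: if g(0) = 0 and g = z·ψ(g) with ψ(0) ≠ 0, then
for n ≥ 1, n · coeff_n(g) = coeff_{n−1}(ψ^n). -/
theorem stmt_2 {K : Type*} [Field K] [CharZero K] (ψ g : PowerSeries K)
    (hg0 : PowerSeries.constantCoeff (R := K) g = 0)
    (hψ0 : PowerSeries.constantCoeff (R := K) ψ ≠ 0)
    (hlag : g = PowerSeries.X * psComp ψ g) :
    ∀ n : ℕ, 1 ≤ n →
      PowerSeries.coeff (R := K) n g = (1 / (n : K)) * PowerSeries.coeff (R := K) (n - 1) (ψ ^ n) := by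
  intro n hn
  obtain ⟨m, rfl⟩ : ∃ m, n = m + 1 := ⟨n - 1, (Nat.succ_pred_eq_of_pos hn).symm⟩
  clear hn
  set n := m + 1 with hnm
  have hn1 : n - 1 = m := by omega
  rw [hn1]
  set v := psComp ψ g with hv
  have hg : g = PowerSeries.X * v := hlag
  have hv0 : PowerSeries.constantCoeff (R := K) v ≠ 0 := by
    have h0 : PowerSeries.constantCoeff (R := K) v = PowerSeries.constantCoeff (R := K) ψ := by
      rw [← PowerSeries.coeff_zero_eq_constantCoeff_apply,
        ← PowerSeries.coeff_zero_eq_constantCoeff_apply, hv, coeff_psComp]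
      simp
    rw [h0]; exact hψ0
  set w := v⁻¹ with hwdef
  have hvw : v * w = 1 := PowerSeries.mul_inv_cancel v hv0
  set Dg := d⁄dX K g with hDg
  set Dv := d⁄dX K v with hDv
  set Dw := d⁄dX K w with hDw
  have hg' : Dg = v + PowerSeries.X * Dv := by
    rw [hDg, hg, Derivation.leibniz, smul_eq_mul, smul_eq_mul,
      PowerSeries.derivative_X, mul_one, ← hDv]
    ring
  have hw' : Dw = -Dv * w ^ 2 := by
    have h0 : v • Dw + w • Dv = 0 := by
      rw [hDw, hDv, ← Derivation.leibniz, hvw]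
      exact Derivation.map_one_eq_zero _
    simp only [smul_eq_mul] at h0
    linear_combination w * h0 - Dw * hvw
  -- key residue lemma
  have key : ∀ j : ℕ, PowerSeries.coeff (R := K) j (w ^ (j + 1) * Dg)
      = if j = 0 then 1 else 0 := by
    intro j
    have h1 : w ^ (j + 1) * Dg = w ^ j + PowerSeries.X * (w ^ (j + 1) * Dv) := by
      rw [hg']
      linear_combination w ^ j * hvw
    rw [h1]
    cases j with
    | zero =>
      simp [PowerSeries.coeff_zero_eq_constantCoeff, map_mul]
    | succ i =>
      rw [map_add, PowerSeries.coeff_succ_X_mul, if_neg (Nat.succ_ne_zero i)]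
      have hDpow : d⁄dX K (w ^ (i + 1)) = -((i + 1 : ℕ) • (Dv * w ^ (i + 2))) := by
        rw [Derivation.leibniz_pow, ← hDw, hw']
        simp only [Nat.add_sub_cancel, smul_eq_mul]
        rw [← neg_nsmul]
        congr 1
        ring
      have hcd : PowerSeries.coeff (R := K) i (d⁄dX K (w ^ (i + 1)))
          = PowerSeries.coeff (R := K) (i + 1) (w ^ (i + 1)) * (i + 1) :=
        PowerSeries.coeff_derivative _ _
      rw [hDpow] at hcd
      rw [map_neg, map_nsmul, nsmul_eq_mul] at hcd
      push_cast at hcd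
      have hne : ((i : K) + 1) ≠ 0 := Nat.cast_add_one_ne_zero i
      have hkey : PowerSeries.coeff (R := K) i (w ^ (i + 2) * Dv)
          = -PowerSeries.coeff (R := K) (i + 1) (w ^ (i + 1)) := by
        rw [show w ^ (i + 2) * Dv = Dv * w ^ (i + 2) from mul_comm _ _]
        refine mul_left_cancel₀ hne ?_
        linear_combination -hcd
      rw [hkey]
      ring
  -- decomposition of ψ^n
  set P : Polynomial K := PowerSeries.trunc n (ψ ^ n) with hP
  have hdvd : (PowerSeries.X : PowerSeries K) ^ n ∣ (ψ ^ n - (P : PowerSeries K)) := by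
    rw [PowerSeries.X_pow_dvd_iff]
    intro k hk
    rw [map_sub, Polynomial.coeff_coe, hP, PowerSeries.coeff_trunc, if_pos hk, sub_self]
  obtain ⟨R, hR⟩ := hdvd
  set S := psComp R g with hS
  have hvn : v ^ n = Polynomial.aeval g P + g ^ n * S := by
    have hψn : (ψ ^ n : PowerSeries K) = (P : PowerSeries K) + PowerSeries.X ^ n * R := by
      rw [← hR]; ring
    rw [hv, ← psComp_pow hg0, hψn, psComp_add, psComp_mul hg0, psComp_pow hg0,
      psComp_X hg0, psComp_coe hg0, hS]
  have hPdeg : P.natDegree < n := by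
    have := PowerSeries.natDegree_trunc_lt (ψ ^ n) m
    simpa [hP, hnm] using this
  have hwg : ∀ j : ℕ, j ≤ n → w ^ n * g ^ j = PowerSeries.X ^ j * w ^ (n - j) := by
    intro j hj
    have h1 : v ^ j * w ^ j = 1 := by rw [← mul_pow, hvw, one_pow]
    calc w ^ n * g ^ j = (w ^ (n - j) * w ^ j) * (PowerSeries.X ^ j * v ^ j) := by
          rw [hg, mul_pow, ← pow_add, Nat.sub_add_cancel hj]
      _ = PowerSeries.X ^ j * (w ^ (n - j) * (v ^ j * w ^ j)) := by ring
      _ = PowerSeries.X ^ j * w ^ (n - j) := by rw [h1, mul_one]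
  have claim1 : PowerSeries.coeff (R := K) m (w ^ n * (Polynomial.aeval g P) * Dg)
      = P.coeff m := by
    rw [Polynomial.aeval_eq_sum_range' hPdeg, Finset.mul_sum, Finset.sum_mul, map_sum]
    have hterm : ∀ j ∈ Finset.range n,
        PowerSeries.coeff (R := K) m (w ^ n * P.coeff j • g ^ j * Dg)
        = if j = m then P.coeff j else 0 := by
      intro j hj
      have hjn : j < n := Finset.mem_range.mp hj
      have hjm : j ≤ m := by omega
      have hrw : w ^ n * P.coeff j • g ^ j * Dg
          = P.coeff j • (PowerSeries.X ^ j * (w ^ (n - j) * Dg)) := by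
        rw [mul_smul_comm, smul_mul_assoc]
        congr 1
        rw [← mul_assoc, hwg j (le_of_lt hjn), mul_assoc]
      rw [hrw, LinearMap.map_smul, smul_eq_mul]
      rw [show m = (m - j) + j by omega, PowerSeries.coeff_X_pow_mul]
      rw [show n - j = (m - j) + 1 by omega, key (m - j)]
      by_cases hjm' : j = m
      · subst hjm'
        simp
      · have hne0 : m - j ≠ 0 := by omega
        simp [hjm', hne0]
    rw [Finset.sum_congr rfl hterm, Finset.sum_ite_eq' (Finset.range n) m fun j => P.coeff j,
      if_pos (Finset.mem_range.mpr (by omega))]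
  have hwgn : w ^ n * g ^ n = PowerSeries.X ^ n := by
    have := hwg n le_rfl
    simpa using this
  have hwvn : w ^ n * v ^ n = 1 := by rw [mul_comm, ← mul_pow, hvw, one_pow]
  have claim2 : PowerSeries.coeff (R := K) m (w ^ n * (Polynomial.aeval g P) * Dg)
      = PowerSeries.coeff (R := K) n g * (n : K) := by
    have hE : w ^ n * (Polynomial.aeval g P) * Dg
        = Dg - PowerSeries.X ^ n * (S * Dg) := by
      have hA : Polynomial.aeval g P = v ^ n - g ^ n * S := by linear_combination -hvn
      rw [hA]
      linear_combination Dg * hwvn - Dg * S * hwgn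
    rw [hE, map_sub]
    have hX0 : PowerSeries.coeff (R := K) m (PowerSeries.X ^ n * (S * Dg)) = 0 :=
      PowerSeries.X_pow_dvd_iff.mp ⟨S * Dg, rfl⟩ m (by omega)
    rw [hX0, sub_zero, hDg, PowerSeries.coeff_derivative]
    rw [hnm]
    push_cast
    ring
  have hPm : P.coeff m = PowerSeries.coeff (R := K) m (ψ ^ n) := by
    rw [hP, PowerSeries.coeff_trunc, if_pos (by omega)]
  have hmain : PowerSeries.coeff (R := K) n g * (n : K) = PowerSeries.coeff (R := K) m (ψ ^ n) := by
    rw [← claim2, claim1, hPm]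
  have hKne : (n : K) ≠ 0 := Nat.cast_ne_zero.mpr (by omega)
  field_simp
  linear_combination hmain
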